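/- Let (R,m,k) ⊆ (S,n,ℓ) be a module-finite local inclusion of complete (adically complete with respect to their maximal ideals) F-finite normal local domains of prime characteristic p, with fraction fields K ⊆ L, and suppose the residue field extension k ⊆ ℓ is separable. Then [ℓ : k] divides [L : K]. -/

import Mathlib

open IsLocalRing Polynomial IntermediateField


/-- A ring `A` of characteristic `p` is `F`-finite if the Frobenius `a ↦ a ^ p` is a
module-finite ring homomorphism. -/
def IsFFinite (p : ℕ) (A : Type*) [CommRing A] : Prop :=
  ∃ f : A →+* A, (∀ x : A, f x = x ^ p) ∧ f.Finite

/-- Let `(R,m,k) ⊆ (S,n,ℓ)` be a module-finite local inclusion of complete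
`F`-finite normal local domains of prime characteristic `p`, with fraction fields `K ⊆ L`, and
suppose the residue field extension `k ⊆ ℓ` is separable.  Then `[ℓ : k]` divides `[L : K]`. -/
theorem residue_degree_dvd_of_complete
    (R S K L : Type*)
    [CommRing R] [IsDomain R] [IsNoetherianRing R] [IsLocalRing R] [IsIntegrallyClosed R]
    [CommRing S] [IsDomain S] [IsNoetherianRing S] [IsLocalRing S] [IsIntegrallyClosed S]
    [IsAdicComplete (IsLocalRing.maximalIdeal R) R]
    [IsAdicComplete (IsLocalRing.maximalIdeal S) S]
    [Algebra R S] [Module.Finite R S]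
    (hinj : Function.Injective (algebraMap R S))
    [IsLocalHom (algebraMap R S)]
    [Field K] [Field L] [Algebra R K] [IsFractionRing R K]
    [Algebra S L] [IsFractionRing S L]
    [Algebra K L] [Algebra R L] [IsScalarTower R S L] [IsScalarTower R K L]
    (p : ℕ) (hp : p.Prime) [CharP R p] [CharP S p]
    (hFR : IsFFinite p R) (hFS : IsFFinite p S)
    (hsep :
      letI : Algebra (IsLocalRing.ResidueField R) (IsLocalRing.ResidueField S) :=
        (IsLocalRing.ResidueField.map (algebraMap R S)).toAlgebra
      Algebra.IsSeparable (IsLocalRing.ResidueField R) (IsLocalRing.ResidueField S)) :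
    letI : Algebra (IsLocalRing.ResidueField R) (IsLocalRing.ResidueField S) :=
      (IsLocalRing.ResidueField.map (algebraMap R S)).toAlgebra
    Module.finrank (IsLocalRing.ResidueField R) (IsLocalRing.ResidueField S) ∣
      Module.finrank K L := by
  classical
  haveI hsep' : Algebra.IsSeparable (ResidueField R) (ResidueField S) := by
    convert hsep
    exact Algebra.algebra_ext _ _ fun r => rfl
  show Module.finrank (ResidueField R) (ResidueField S) ∣ Module.finrank K L
  haveI : IsScalarTower R (ResidueField R) (ResidueField S) :=
    IsScalarTower.of_algebraMap_eq fun r => rfl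
  haveI : IsScalarTower R S (ResidueField S) := IsScalarTower.of_algebraMap_eq fun r => rfl
  haveI : Module.Finite S (ResidueField S) := Module.Finite.quotient S (maximalIdeal S)
  haveI : Module.Finite R (ResidueField S) := Module.Finite.trans S (ResidueField S)
  haveI : Module.Finite (ResidueField R) (ResidueField S) :=
    Module.Finite.of_restrictScalars_finite R _ _
  obtain ⟨θ, hθ⟩ := Field.exists_primitive_element (ResidueField R) (ResidueField S)
  have hint : IsIntegral (ResidueField R) θ := IsIntegral.of_finite _ θ
  have hfinrk : Module.finrank (ResidueField R) (ResidueField S)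
      = (minpoly (ResidueField R) θ).natDegree := by
    rw [← IntermediateField.finrank_top', ← hθ, IntermediateField.adjoin.finrank hint]
  -- lift the minimal polynomial to R
  have hlift : minpoly (ResidueField R) θ ∈ Polynomial.lifts (residue R) := by
    rw [Polynomial.lifts_iff_coeff_lifts]
    exact fun n => Ideal.Quotient.mk_surjective _
  obtain ⟨g, hgmap, hgdeg, hgmonic⟩ :=
    Polynomial.lifts_and_natDegree_eq_and_monic hlift (minpoly.monic hint)
  set G : S[X] := g.map (algebraMap R S) with hG
  have hGmonic : G.Monic := hgmonic.map _
  have hGres : G.map (residue S) = (minpoly (ResidueField R) θ).map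
      (algebraMap (ResidueField R) (ResidueField S)) := by
    rw [hG, Polynomial.map_map, ← IsLocalRing.ResidueField.map_comp_residue (algebraMap R S),
      ← Polynomial.map_map, hgmap]
    rfl
  obtain ⟨s₀, hs₀⟩ := Ideal.Quotient.mk_surjective (I := maximalIdeal S) θ
  have hres_eval : ∀ q : S[X], residue S (q.eval s₀) = (q.map (residue S)).eval θ := by
    intro q
    rw [Polynomial.eval_map, ← hs₀]
    exact (Polynomial.eval₂_at_apply (residue S) s₀).symm ▸
      (Polynomial.hom_eval₂ q (RingHom.id S) (residue S) s₀).symm ▸ rfl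
  have h1 : G.eval s₀ ∈ maximalIdeal S := by
    have : residue S (G.eval s₀) = 0 := by
      rw [hres_eval, hGres, Polynomial.eval_map, ← Polynomial.aeval_def, minpoly.aeval]
    exact Ideal.Quotient.eq_zero_iff_mem.mp this
  have h2 : IsUnit (Ideal.Quotient.mk (maximalIdeal S) (G.derivative.eval s₀)) := by
    have heq : residue S (G.derivative.eval s₀)
        = Polynomial.aeval θ (Polynomial.derivative (minpoly (ResidueField R) θ)) := by
      rw [hres_eval, ← Polynomial.derivative_map, hGres, Polynomial.derivative_map,
        Polynomial.eval_map, ← Polynomial.aeval_def]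
    have hne : residue S (G.derivative.eval s₀) ≠ 0 := by
      rw [heq]
      exact (Algebra.IsSeparable.isSeparable (ResidueField R) θ).aeval_derivative_ne_zero
        (minpoly.aeval _ _)
    exact isUnit_iff_ne_zero.mpr hne
  obtain ⟨s, hroot, -⟩ := HenselianRing.is_henselian G hGmonic s₀ h1 h2
  set x : L := algebraMap S L s with hx
  set gK : K[X] := g.map (algebraMap R K) with hgK
  have hgKmonic : gK.Monic := hgmonic.map _
  have hxroot : Polynomial.aeval x gK = 0 := by
    rw [Polynomial.aeval_def, ← Polynomial.eval_map, hgK, Polynomial.map_map,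
      ← IsScalarTower.algebraMap_eq, IsScalarTower.algebraMap_eq R S L,
      ← Polynomial.map_map, ← hG, Polynomial.eval_map, hx,
      Polynomial.eval₂_at_apply]
    rw [Polynomial.IsRoot] at hroot
    rw [hroot, map_zero]
  have hgirr : Irreducible g :=
    hgmonic.irreducible_of_irreducible_map (residue R) g (hgmap ▸ minpoly.irreducible hint)
  have hgKirr : Irreducible gK :=
    (Polynomial.Monic.irreducible_iff_irreducible_map_fraction_map hgmonic).mp hgirr
  have hxint : IsIntegral K x := ⟨gK, hgKmonic, by rwa [← Polynomial.aeval_def]⟩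
  have hmin : minpoly K x = gK := (minpoly.eq_of_irreducible_of_monic hgKirr hxroot hgKmonic).symm
  have hdeg : Module.finrank K K⟮x⟯ = Module.finrank (ResidueField R) (ResidueField S) := by
    rw [IntermediateField.adjoin.finrank hxint, hmin, hfinrk, hgK,
      hgmonic.natDegree_map, hgdeg]
  exact ⟨Module.finrank K⟮x⟯ L, by rw [← hdeg, Module.finrank_mul_finrank]⟩
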